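/- Product theorem for Riesz means (Hardy–Riesz, Theorem 56, used to prove Theorem 2): Let (λ_m)_{m∈ℕ} and (μ_n)_{n∈ℕ} be strictly increasing sequences of positive real numbers tending to infinity, let (a_m)_{m∈ℕ} and (b_n)_{n∈ℕ} be complex numbers, and let κ₁, κ₂ ≥ 0. If ∑ a_m is Riesz summable with parameters ((λ_m), κ₁) to A and ∑ b_n is Riesz summable with parameters ((μ_n), κ₂) to B, then the double family (a_m b_n) is Riesz summable with respect to the exponents ν_{m,n} = λ_m + μ_n and order κ₁ + κ₂ + 1 to the product A·B; that is, the finite sums ∑_{(m,n) : λ_m + μ_n < ω} (1 − (λ_m + μ_n)/ω)^{κ₁+κ₂+1} · a_m b_n converge to A·B as ω → +∞. -/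

import Mathlib

open Filter Topology

/-- The Riesz mean of order `κ` of a series `∑ a n` with exponents `l n`, at the
point `ω`: `∑_{n : l n < ω} (1 - l n / ω)^κ • a n`. -/
noncomputable def rieszMean (l : ℕ → ℝ) (a : ℕ → ℂ) (κ : ℝ) (ω : ℝ) : ℂ :=
  ∑ᶠ n ∈ {n | l n < ω}, ((1 - l n / ω) ^ κ : ℝ) • a n

/-- The series `∑ a n` is Riesz summable with parameters `(l, κ)` to `A` if its
Riesz means of order `κ` converge to `A` as `ω → ∞`. -/
def RieszSummableTo (l : ℕ → ℝ) (a : ℕ → ℂ) (κ : ℝ) (A : ℂ) : Prop :=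
  Tendsto (rieszMean l a κ) atTop (𝓝 A)

open MeasureTheory Set intervalIntegral

section Helpers

/-- The normalization constant `B(κ₁+1, κ₂+1)` as an elementary integral. -/
noncomputable def betaC (κ₁ κ₂ : ℝ) : ℝ := ∫ s in (0:ℝ)..1, s ^ κ₁ * (1 - s) ^ κ₂

lemma finite_setOf_lt {l : ℕ → ℝ} (hl : Tendsto l atTop atTop) (ω : ℝ) :
    {n | l n < ω}.Finite := by
  obtain ⟨N, hN⟩ := (hl.eventually (eventually_ge_atTop ω)).exists_forall_of_atTop
  exact (Set.finite_Iio N).subset fun n hn => by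
    by_contra h; exact absurd (hN n (not_lt.1 h)) (not_le.2 hn)

lemma cont_rpow {κ : ℝ} (hκ : 0 ≤ κ) : Continuous (fun x : ℝ => x ^ κ) :=
  continuous_iff_continuousAt.2 fun x => Real.continuousAt_rpow_const x κ (Or.inr hκ)

lemma betaC_pos {κ₁ κ₂ : ℝ} (hκ₁ : 0 ≤ κ₁) (hκ₂ : 0 ≤ κ₂) : 0 < betaC κ₁ κ₂ := by
  apply intervalIntegral.intervalIntegral_pos_of_pos_on
  · exact (((cont_rpow hκ₁).mul ((cont_rpow hκ₂).comp
      (continuous_const.sub continuous_id))).intervalIntegrable 0 1)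
  · intro x hx
    exact mul_pos (Real.rpow_pos_of_pos hx.1 _) (Real.rpow_pos_of_pos (by linarith [hx.2]) _)
  · norm_num

lemma beta_scaled {κ₁ κ₂ : ℝ} (hκ₁ : 0 ≤ κ₁) (hκ₂ : 0 ≤ κ₂) {D : ℝ} (hD : 0 < D) :
    ∫ u in (0:ℝ)..D, u ^ κ₁ * (D - u) ^ κ₂ = D ^ (κ₁ + κ₂ + 1) * betaC κ₁ κ₂ := by
  have h := integral_comp_mul_left (a := (0:ℝ)) (b := 1)
    (fun u => u ^ κ₁ * (D - u) ^ κ₂) hD.ne'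
  simp only [mul_zero, mul_one] at h
  have h2 : ∫ x in (0:ℝ)..1, (D * x) ^ κ₁ * (D - D * x) ^ κ₂
      = D ^ (κ₁ + κ₂) * betaC κ₁ κ₂ := by
    rw [show D ^ (κ₁ + κ₂) * betaC κ₁ κ₂
        = ∫ x in (0:ℝ)..1, D ^ (κ₁ + κ₂) * (x ^ κ₁ * (1 - x) ^ κ₂) from
      (intervalIntegral.integral_const_mul _ _).symm]
    apply intervalIntegral.integral_congr
    intro s hs
    rw [Set.uIcc_of_le (by norm_num : (0:ℝ) ≤ 1)] at hs
    have h0 : (0:ℝ) ≤ s := hs.1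
    have h1 : s ≤ 1 := hs.2
    show (D * s) ^ κ₁ * (D - D * s) ^ κ₂ = _
    rw [Real.mul_rpow hD.le h0, show D - D * s = D * (1 - s) by ring,
      Real.mul_rpow hD.le (by linarith), Real.rpow_add hD]
    ring
  rw [h2] at h
  have h3 : (∫ u in (0:ℝ)..D, u ^ κ₁ * (D - u) ^ κ₂)
      = D * (D ^ (κ₁ + κ₂) * betaC κ₁ κ₂) := by
    rw [h, smul_eq_mul]; field_simp
  rw [h3, show κ₁ + κ₂ + 1 = 1 + (κ₁ + κ₂) by ring,
    Real.rpow_add hD 1 (κ₁ + κ₂), Real.rpow_one]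
  ring

lemma indicator_beta {κ₁ κ₂ : ℝ} (hκ₁ : 0 ≤ κ₁) (hκ₂ : 0 ≤ κ₂) {lam mu ω : ℝ}
    (hlam : 0 < lam) (hmu : 0 < mu) (hω : 0 < ω) :
    ∫ t in (0:ℝ)..ω,
        (Ioo lam (ω - mu)).indicator (fun t => (t - lam) ^ κ₁ * (ω - mu - t) ^ κ₂) t
      = if lam + mu < ω then (ω - (lam + mu)) ^ (κ₁ + κ₂ + 1) * betaC κ₁ κ₂ else 0 := by
  by_cases hc : lam + mu < ω
  · rw [if_pos hc]
    set e := ω - mu with he_def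
    have he : lam < e := by simp only [he_def]; linarith
    have hsub : Ioo lam e ⊆ Ioc 0 ω := fun t ht =>
      ⟨lt_trans hlam ht.1, le_of_lt (lt_of_lt_of_le ht.2 (by simp only [he_def]; linarith))⟩
    rw [intervalIntegral.integral_of_le hω.le, MeasureTheory.integral_indicator measurableSet_Ioo,
      Measure.restrict_restrict measurableSet_Ioo, Set.inter_eq_self_of_subset_left hsub,
      ← MeasureTheory.integral_Ioc_eq_integral_Ioo, ← intervalIntegral.integral_of_le he.le]
    have hshift := integral_comp_sub_right (a := lam) (b := e)
      (fun u => u ^ κ₁ * (e - lam - u) ^ κ₂) lam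
    have hcong : (∫ t in lam..e, (t - lam) ^ κ₁ * (e - lam - (t - lam)) ^ κ₂)
        = ∫ t in lam..e, (t - lam) ^ κ₁ * (e - t) ^ κ₂ := by
      apply intervalIntegral.integral_congr; intro t _; norm_num
    rw [← hcong, hshift, sub_self]
    have hD : 0 < e - lam := by linarith
    rw [beta_scaled hκ₁ hκ₂ hD]
    have hEq : e - lam = ω - (lam + mu) := by rw [he_def]; ring
    rw [hEq]
  · rw [if_neg hc]
    have : Ioo lam (ω - mu) = ∅ := Set.Ioo_eq_empty (by intro h; exact hc (by linarith))
    simp [this]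

lemma ind_prod (κ₁ κ₂ lam mu ω t : ℝ) :
    (Ioi lam).indicator (fun x => (x - lam) ^ κ₁) t *
      (Ioi mu).indicator (fun x => (x - mu) ^ κ₂) (ω - t)
    = (Ioo lam (ω - mu)).indicator
        (fun x => (x - lam) ^ κ₁ * (ω - mu - x) ^ κ₂) t := by
  by_cases h1 : lam < t <;> by_cases h2 : mu < ω - t
  · rw [Set.indicator_of_mem (by exact h1 : t ∈ Ioi lam),
      Set.indicator_of_mem (by exact h2 : ω - t ∈ Ioi mu),
      Set.indicator_of_mem (by constructor <;> [exact h1; linarith] : t ∈ Ioo lam (ω - mu))]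
    congr 1; ring_nf
  · rw [Set.indicator_of_notMem (by simpa using h2 : ω - t ∉ Ioi mu),
      Set.indicator_of_notMem (fun h => h2 (by have := h.2; simp only [mem_Ioo] at *; linarith)
        : t ∉ Ioo lam (ω - mu)), mul_zero]
  · rw [Set.indicator_of_notMem (by simpa using h1 : t ∉ Ioi lam),
      Set.indicator_of_notMem (fun h => h1 h.1 : t ∉ Ioo lam (ω - mu)), zero_mul]
  · rw [Set.indicator_of_notMem (by simpa using h1 : t ∉ Ioi lam),
      Set.indicator_of_notMem (fun h => h1 h.1 : t ∉ Ioo lam (ω - mu)), zero_mul]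

lemma intInt_ind_smul {p q : ℝ} {ψ : ℝ → ℝ} (hψ : Continuous ψ) (z : ℂ) (c d : ℝ) :
    IntervalIntegrable (fun t => ((Ioo p q).indicator ψ t) • z) volume c d := by
  rw [intervalIntegrable_iff]
  apply Integrable.smul_const
  rw [integrable_indicator_iff measurableSet_Ioo]
  have h1 : Integrable ψ (volume.restrict (Ioo p q)) :=
    ((hψ.integrableOn_Icc (a := p) (b := q))).mono_set Set.Ioo_subset_Icc_self
  exact h1.mono_measure (by
    rw [Measure.restrict_restrict measurableSet_Ioo]
    exact Measure.restrict_mono Set.inter_subset_left le_rfl)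

lemma rieszMean_nonpos {l : ℕ → ℝ} (hlpos : ∀ n, 0 < l n) {a : ℕ → ℂ} {κ t : ℝ}
    (ht : t ≤ 0) : rieszMean l a κ t = 0 := by
  have : {n | l n < t} = ∅ := by
    ext n; simp only [mem_setOf_eq, mem_empty_iff_false, iff_false, not_lt]
    exact le_trans ht (hlpos n).le
  rw [rieszMean, this, finsum_mem_empty]

lemma riesz_bounded {l : ℕ → ℝ} (hlpos : ∀ n, 0 < l n) (hltop : Tendsto l atTop atTop)
    {a : ℕ → ℂ} {κ : ℝ} (hκ : 0 ≤ κ) {A : ℂ}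
    (ha : Tendsto (rieszMean l a κ) atTop (𝓝 A)) :
    ∃ M : ℝ, 0 ≤ M ∧ ∀ t : ℝ, ‖rieszMean l a κ t‖ ≤ M := by
  obtain ⟨T, hT⟩ := (ha.eventually (Metric.closedBall_mem_nhds A one_pos)).exists_forall_of_atTop
  set SB := ∑ m ∈ (finite_setOf_lt hltop T).toFinset, ‖a m‖ with hSB
  refine ⟨max (‖A‖ + 1) SB, le_max_of_le_left (by positivity), fun t => ?_⟩
  rcases le_or_gt T t with h | h
  · refine le_max_of_le_left ?_
    have := hT t h
    simp only [Metric.mem_closedBall, dist_eq_norm] at this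
    calc ‖rieszMean l a κ t‖ ≤ ‖rieszMean l a κ t - A‖ + ‖A‖ := by
          simpa using norm_add_le (rieszMean l a κ t - A) A
      _ ≤ ‖A‖ + 1 := by linarith
  · refine le_max_of_le_right ?_
    have hfin := finite_setOf_lt hltop t
    rw [rieszMean, finsum_mem_eq_finite_toFinset_sum _ hfin]
    calc ‖∑ m ∈ hfin.toFinset, ((1 - l m / t) ^ κ : ℝ) • a m‖
        ≤ ∑ m ∈ hfin.toFinset, ‖((1 - l m / t) ^ κ : ℝ) • a m‖ := norm_sum_le _ _
      _ ≤ ∑ m ∈ hfin.toFinset, ‖a m‖ := by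
          apply Finset.sum_le_sum
          intro m hm
          rw [Set.Finite.mem_toFinset] at hm
          have hlt : l m < t := hm
          have ht0 : 0 < t := (hlpos m).trans hlt
          rw [norm_smul, Real.norm_eq_abs]
          have h0 : 0 ≤ 1 - l m / t := by
            rw [sub_nonneg]; exact (div_le_one ht0).2 hlt.le
          have h1 : (1 - l m / t) ^ κ ≤ 1 :=
            Real.rpow_le_one h0 (by
              have : 0 < l m / t := div_pos (hlpos m) ht0
              linarith) hκ
          have h2 : 0 ≤ (1 - l m / t) ^ κ := Real.rpow_nonneg h0 κ
          rw [abs_of_nonneg h2]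
          nlinarith [norm_nonneg (a m)]
      _ ≤ SB := by
          apply Finset.sum_le_sum_of_subset_of_nonneg
          · intro m hm
            rw [Set.Finite.mem_toFinset] at *
            exact lt_trans hm h
          · intro m _ _; exact norm_nonneg _

lemma rieszMean_eq_filter_sum {l : ℕ → ℝ} {a : ℕ → ℂ} {κ t : ℝ}
    (hltop : Tendsto l atTop atTop) {S : Finset ℕ} (hsub : ∀ m, l m < t → m ∈ S) :
    rieszMean l a κ t
      = ∑ m ∈ S.filter (fun m => l m < t), ((1 - l m / t) ^ κ : ℝ) • a m := by
  have hfin := finite_setOf_lt hltop t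
  rw [rieszMean, finsum_mem_eq_finite_toFinset_sum _ hfin]
  apply Finset.sum_congr _ (fun _ _ => rfl)
  ext m
  simp only [Set.Finite.mem_toFinset, mem_setOf_eq, Finset.mem_filter]
  exact ⟨fun h => ⟨hsub m h, h⟩, fun h => h.2⟩

lemma riesz_comp_meas {l : ℕ → ℝ} (hltop : Tendsto l atTop atTop)
    (a : ℕ → ℂ) {κ : ℝ} (hκ : 0 ≤ κ) {ω : ℝ}
    {e : ℝ → ℝ} (he : Measurable e) (hbd : ∀ s ∈ Ioc (0:ℝ) 1, e s ≤ ω) :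
    AEStronglyMeasurable (fun s => rieszMean l a κ (e s))
      (volume.restrict (Ioc (0:ℝ) 1)) := by
  classical
  set S := (finite_setOf_lt hltop ω).toFinset with hS
  set g : ℝ → ℂ := fun t => ∑ m ∈ S,
    ({x : ℝ | l m < x}.indicator (fun x => (((1 - l m / x) ^ κ : ℝ) : ℂ) * a m) t) with hg
  have hmeas : Measurable g := by
    apply Finset.measurable_sum
    intro m _
    exact Measurable.indicator ((Complex.measurable_ofReal.comp ((cont_rpow hκ).measurable.comp
      ((measurable_const.sub (measurable_const.div measurable_id))))).mul_const _)
      measurableSet_Ioi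
  have key : ∀ t ≤ ω, rieszMean l a κ t = g t := by
    intro t ht
    rw [rieszMean_eq_filter_sum hltop (S := S) (fun m hm => by
      rw [hS, Set.Finite.mem_toFinset]; exact lt_of_lt_of_le hm ht)]
    rw [hg, Finset.sum_filter]
    apply Finset.sum_congr rfl
    intro m _
    rw [Set.indicator_apply]
    simp only [mem_setOf_eq]
    split_ifs with h
    · rw [Complex.real_smul]
    · rfl
  exact ((hmeas.comp he).aestronglyMeasurable).congr
    (((ae_restrict_mem measurableSet_Ioc).mono fun s hs => (key (e s) (hbd s hs)).symm))

end Helpers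

/-- Product theorem for Riesz means (Hardy–Riesz, Theorem 56): if `∑ a m` is Riesz
summable with parameters `(l, κ₁)` to `A` and `∑ b n` with parameters `(m, κ₂)` to
`B`, then the double family `(a m * b n)` is Riesz summable with exponents
`ν_{m,n} = l m + m n` and order `κ₁ + κ₂ + 1` to `A * B`. -/
theorem riesz_product (l μ : ℕ → ℝ)
    (hlmono : StrictMono l) (hlpos : ∀ n, 0 < l n) (hltop : Tendsto l atTop atTop)
    (hμmono : StrictMono μ) (hμpos : ∀ n, 0 < μ n) (hμtop : Tendsto μ atTop atTop)
    (a b : ℕ → ℂ) (κ₁ κ₂ : ℝ) (hκ₁ : 0 ≤ κ₁) (hκ₂ : 0 ≤ κ₂) (A B : ℂ)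
    (ha : RieszSummableTo l a κ₁ A) (hb : RieszSummableTo μ b κ₂ B) :
    Tendsto (fun ω : ℝ =>
        ∑ᶠ p ∈ {p : ℕ × ℕ | l p.1 + μ p.2 < ω},
          ((1 - (l p.1 + μ p.2) / ω) ^ (κ₁ + κ₂ + 1) : ℝ) • (a p.1 * b p.2))
      atTop (𝓝 (A * B)) := by
  classical
  have hc : 0 < betaC κ₁ κ₂ := betaC_pos hκ₁ hκ₂
  set c := betaC κ₁ κ₂ with hcdef
  obtain ⟨M₁, hM₁0, hM₁⟩ := riesz_bounded hlpos hltop hκ₁ ha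
  obtain ⟨M₂, hM₂0, hM₂⟩ := riesz_bounded hμpos hμtop hκ₂ hb
  set Gf : ℝ → ℝ → ℂ := fun ω s =>
    rieszMean l a κ₁ (ω * s) * rieszMean μ b κ₂ (ω * (1 - s)) *
      ((s ^ κ₁ * (1 - s) ^ κ₂ : ℝ) : ℂ) with hGf
  have coef_cont : Continuous (fun s : ℝ => s ^ κ₁ * (1 - s) ^ κ₂) :=
    (cont_rpow hκ₁).mul ((cont_rpow hκ₂).comp (continuous_const.sub continuous_id))
  -- Dominated convergence
  have hL : Tendsto (fun ω => ∫ s in Ioc (0:ℝ) 1, Gf ω s) atTop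
      (𝓝 (∫ s in Ioc (0:ℝ) 1, (A * B) * ((s ^ κ₁ * (1 - s) ^ κ₂ : ℝ) : ℂ))) := by
    apply MeasureTheory.tendsto_integral_filter_of_dominated_convergence
      (bound := fun s => M₁ * M₂ * (s ^ κ₁ * (1 - s) ^ κ₂))
    · filter_upwards [eventually_gt_atTop (0:ℝ)] with ω hω
      have m1 : AEStronglyMeasurable (fun s => rieszMean l a κ₁ (ω * s))
          (volume.restrict (Ioc (0:ℝ) 1)) :=
        riesz_comp_meas hltop a hκ₁ (measurable_id.const_mul ω)
          (fun s hs => by nlinarith [hs.1, hs.2])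
      have m2 : AEStronglyMeasurable (fun s => rieszMean μ b κ₂ (ω * (1 - s)))
          (volume.restrict (Ioc (0:ℝ) 1)) :=
        riesz_comp_meas hμtop b hκ₂ ((measurable_const.sub measurable_id).const_mul ω)
          (fun s hs => by nlinarith [hs.1, hs.2])
      exact (m1.mul m2).mul
        ((Complex.continuous_ofReal.comp coef_cont).aestronglyMeasurable)
    · filter_upwards with ω
      filter_upwards [ae_restrict_mem measurableSet_Ioc] with s hs
      have h0 : (0:ℝ) ≤ s := hs.1.le
      have h1 : s ≤ 1 := hs.2
      have hco : (0:ℝ) ≤ s ^ κ₁ * (1 - s) ^ κ₂ :=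
        mul_nonneg (Real.rpow_nonneg h0 _) (Real.rpow_nonneg (by linarith) _)
      simp only [hGf, norm_mul, Complex.norm_real, Real.norm_eq_abs]
      rw [abs_of_nonneg (Real.rpow_nonneg h0 κ₁),
        abs_of_nonneg (Real.rpow_nonneg (by linarith : (0:ℝ) ≤ 1 - s) κ₂)]
      exact mul_le_mul (mul_le_mul (hM₁ _) (hM₂ _) (norm_nonneg _) hM₁0) le_rfl hco
        (by positivity)
    · exact ((continuous_const.mul coef_cont).integrableOn_Icc).mono_set
        Set.Ioc_subset_Icc_self
    · have hae : ∀ᵐ s ∂(volume.restrict (Ioc (0:ℝ) 1)), s ∈ Ioo (0:ℝ) 1 := by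
        rw [← Measure.restrict_congr_set Ioo_ae_eq_Ioc]
        exact ae_restrict_mem measurableSet_Ioo
      filter_upwards [hae] with s hs
      have h1 : Tendsto (fun ω : ℝ => ω * s) atTop atTop := by
        simpa [mul_comm] using Tendsto.atTop_mul_const hs.1 (tendsto_id (α := ℝ))
      have h2 : Tendsto (fun ω : ℝ => ω * (1 - s)) atTop atTop := by
        simpa [mul_comm] using
          Tendsto.atTop_mul_const (by linarith [hs.2] : (0:ℝ) < 1 - s) (tendsto_id (α := ℝ))
      exact ((ha.comp h1).mul (hb.comp h2)).mul_const _
  -- value of the limit integral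
  have hlim : (∫ s in Ioc (0:ℝ) 1, (A * B) * ((s ^ κ₁ * (1 - s) ^ κ₂ : ℝ) : ℂ))
      = (A * B) * ((c : ℝ) : ℂ) := by
    rw [MeasureTheory.integral_const_mul]
    congr 1
    calc ∫ s in Ioc (0:ℝ) 1, ((s ^ κ₁ * (1 - s) ^ κ₂ : ℝ) : ℂ)
        = ((∫ s in Ioc (0:ℝ) 1, (s ^ κ₁ * (1 - s) ^ κ₂ : ℝ) : ℝ) : ℂ) :=
          _root_.integral_ofReal
      _ = ((c : ℝ) : ℂ) := by
          norm_cast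
          rw [hcdef, betaC, intervalIntegral.integral_of_le zero_le_one]
  -- the main identity
  have hId : ∀ ω : ℝ, 0 < ω →
      (∑ᶠ p ∈ {p : ℕ × ℕ | l p.1 + μ p.2 < ω},
        ((1 - (l p.1 + μ p.2) / ω) ^ (κ₁ + κ₂ + 1) : ℝ) • (a p.1 * b p.2))
      = (c⁻¹ : ℝ) • ∫ s in Ioc (0:ℝ) 1, Gf ω s := by
    intro ω hω
    set S := (finite_setOf_lt hltop ω).toFinset with hSdef
    set T := (finite_setOf_lt hμtop ω).toFinset with hTdef
    have hPfin : {p : ℕ × ℕ | l p.1 + μ p.2 < ω}.Finite :=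
      ((finite_setOf_lt hltop ω).prod (finite_setOf_lt hμtop ω)).subset
        (fun p hp => by
          simp only [mem_setOf_eq, Set.mem_prod] at *
          exact ⟨by have := hμpos p.2; linarith, by have := hlpos p.1; linarith⟩)
    set F : ℕ → ℝ → ℂ := fun m t =>
      ((Ioi (l m)).indicator (fun x => (x - l m) ^ κ₁) t) • a m with hF
    set Gn : ℕ → ℝ → ℂ := fun n t =>
      ((Ioi (μ n)).indicator (fun x => (x - μ n) ^ κ₂) t) • b n with hGnd
    -- the single-variable Riesz sums as indicator sums
    have fA_eq : ∀ t : ℝ, 0 < t → t ≤ ω →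
        (∑ m ∈ S, F m t) = (t ^ κ₁ : ℝ) • rieszMean l a κ₁ t := by
      intro t h0 ht
      have hterm : ∀ m ∈ S, F m t
          = if l m < t then (t ^ κ₁ : ℝ) • (((1 - l m / t) ^ κ₁ : ℝ) • a m) else 0 := by
        intro m _
        simp only [hF, Set.indicator_apply, mem_Ioi]
        split_ifs with h
        · rw [smul_smul]
          congr 1
          rw [← Real.mul_rpow h0.le (by rw [sub_nonneg]; exact (div_le_one h0).2 h.le)]
          congr 1
          field_simp
        · exact zero_smul ℝ _
      rw [Finset.sum_congr rfl hterm, ← Finset.sum_filter, ← Finset.smul_sum,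
        rieszMean_eq_filter_sum hltop (S := S) (fun m hm => by
          rw [hSdef, Set.Finite.mem_toFinset]; exact lt_of_lt_of_le hm ht)]
    have fB_eq : ∀ t : ℝ, 0 < t → t ≤ ω →
        (∑ n ∈ T, Gn n t) = (t ^ κ₂ : ℝ) • rieszMean μ b κ₂ t := by
      intro t h0 ht
      have hterm : ∀ n ∈ T, Gn n t
          = if μ n < t then (t ^ κ₂ : ℝ) • (((1 - μ n / t) ^ κ₂ : ℝ) • b n) else 0 := by
        intro n _
        simp only [hGnd, Set.indicator_apply, mem_Ioi]
        split_ifs with h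
        · rw [smul_smul]
          congr 1
          rw [← Real.mul_rpow h0.le (by rw [sub_nonneg]; exact (div_le_one h0).2 h.le)]
          congr 1
          field_simp
        · exact zero_smul ℝ _
      rw [Finset.sum_congr rfl hterm, ← Finset.sum_filter, ← Finset.smul_sum,
        rieszMean_eq_filter_sum hμtop (S := T) (fun n hn => by
          rw [hTdef, Set.Finite.mem_toFinset]; exact lt_of_lt_of_le hn ht)]
    have fA0 : ∀ t : ℝ, t ≤ 0 → (∑ m ∈ S, F m t) = 0 := by
      intro t ht
      apply Finset.sum_eq_zero; intro m _
      simp only [hF]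
      rw [Set.indicator_of_notMem (by
        simp only [mem_Ioi, not_lt]; linarith [hlpos m]), zero_smul]
    have fB0 : ∀ t : ℝ, t ≤ 0 → (∑ n ∈ T, Gn n t) = 0 := by
      intro t ht
      apply Finset.sum_eq_zero; intro n _
      simp only [hGnd]
      rw [Set.indicator_of_notMem (by
        simp only [mem_Ioi, not_lt]; linarith [hμpos n]), zero_smul]
    -- the product as a double sum of indicator functions
    have ψcont : ∀ p : ℕ × ℕ,
        Continuous (fun x : ℝ => (x - l p.1) ^ κ₁ * (ω - μ p.2 - x) ^ κ₂) := fun p =>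
      ((cont_rpow hκ₁).comp (continuous_id.sub continuous_const)).mul
        ((cont_rpow hκ₂).comp (continuous_const.sub continuous_id))
    set H : ℕ × ℕ → ℝ → ℂ := fun p t =>
      ((Ioo (l p.1) (ω - μ p.2)).indicator
        (fun x => (x - l p.1) ^ κ₁ * (ω - μ p.2 - x) ^ κ₂) t) • (a p.1 * b p.2) with hHdef
    set Φ : ℝ → ℂ := fun t => (∑ m ∈ S, F m t) * (∑ n ∈ T, Gn n (ω - t)) with hΦ
    have hB1 : ∀ t : ℝ, Φ t = ∑ p ∈ S ×ˢ T, H p t := by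
      intro t
      simp only [hΦ]
      rw [Finset.sum_mul_sum, ← Finset.sum_product']
      apply Finset.sum_congr rfl
      intro p _
      simp only [hF, hGnd, hHdef]
      rw [smul_mul_smul_comm, ind_prod κ₁ κ₂ (l p.1) (μ p.2) ω t]
    set Cω : ℂ := ∑ p ∈ hPfin.toFinset,
      (((ω - (l p.1 + μ p.2)) ^ (κ₁ + κ₂ + 1) : ℝ)) • (a p.1 * b p.2) with hCωdef
    have hBint : (∫ t in (0:ℝ)..ω, Φ t) = (c : ℝ) • Cω := by
      calc (∫ t in (0:ℝ)..ω, Φ t)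
          = ∫ t in (0:ℝ)..ω, ∑ p ∈ S ×ˢ T, H p t := by
            apply intervalIntegral.integral_congr; intro t _; exact hB1 t
        _ = ∑ p ∈ S ×ˢ T, ∫ t in (0:ℝ)..ω, H p t :=
            intervalIntegral.integral_finset_sum (fun p _ => by
              simp only [hHdef]; exact intInt_ind_smul (ψcont p) _ 0 ω)
        _ = ∑ p ∈ S ×ˢ T, (if l p.1 + μ p.2 < ω then
              ((ω - (l p.1 + μ p.2)) ^ (κ₁ + κ₂ + 1) * c : ℝ) else 0) • (a p.1 * b p.2) := by
            apply Finset.sum_congr rfl; intro p _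
            simp only [hHdef]
            rw [intervalIntegral.integral_smul_const,
              indicator_beta hκ₁ hκ₂ (hlpos p.1) (hμpos p.2) hω]
        _ = ∑ p ∈ (S ×ˢ T).filter (fun p => l p.1 + μ p.2 < ω),
              (((ω - (l p.1 + μ p.2)) ^ (κ₁ + κ₂ + 1) * c : ℝ)) • (a p.1 * b p.2) := by
            rw [Finset.sum_filter]
            apply Finset.sum_congr rfl; intro p _
            rw [ite_smul, zero_smul]
        _ = (c : ℝ) • Cω := by
            rw [hCωdef, Finset.smul_sum]
            apply Finset.sum_congr
            · ext p
              simp only [Finset.mem_filter, Finset.mem_product, Set.Finite.mem_toFinset,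
                mem_setOf_eq, hSdef, hTdef]
              constructor
              · exact fun h => h.2
              · intro h
                exact ⟨⟨by have := hμpos p.2; linarith, by have := hlpos p.1; linarith⟩, h⟩
            · intro p _
              rw [smul_smul, mul_comm]
    -- change of variables t = ω s
    have hCoV := integral_comp_mul_left (a := (0:ℝ)) (b := 1) Φ hω.ne'
    simp only [mul_zero, mul_one] at hCoV
    have h6 : (∫ t in (0:ℝ)..ω, Φ t) = ω • ∫ s in (0:ℝ)..1, Φ (ω * s) := by
      rw [hCoV, smul_smul, mul_inv_cancel₀ hω.ne', one_smul]
    have hD : (∫ s in (0:ℝ)..1, Φ (ω * s))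
        = (ω ^ (κ₁ + κ₂) : ℝ) • ∫ s in Ioc (0:ℝ) 1, Gf ω s := by
      rw [← intervalIntegral.integral_of_le (zero_le_one (α := ℝ)) (f := Gf ω),
        ← intervalIntegral.integral_smul]
      apply intervalIntegral.integral_congr
      intro s hs
      rw [Set.uIcc_of_le zero_le_one] at hs
      obtain ⟨h0, h1⟩ := hs
      simp only [hΦ]
      rcases h0.eq_or_lt with rfl | hpos
      · rw [mul_zero, fA0 0 le_rfl, zero_mul]
        simp only [hGf, mul_zero]
        rw [rieszMean_nonpos hlpos le_rfl]
        simp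
      rcases h1.eq_or_lt with rfl | hlt1
      · rw [mul_one, sub_self, fB0 0 le_rfl, mul_zero]
        simp only [hGf, sub_self, mul_zero]
        rw [rieszMean_nonpos hμpos le_rfl]
        simp
      · have harg : ω - ω * s = ω * (1 - s) := by ring
        rw [fA_eq (ω * s) (by positivity) (by nlinarith), harg,
          fB_eq (ω * (1 - s)) (by nlinarith) (by nlinarith), smul_mul_smul_comm]
        have hGfs : Gf ω s = ((s ^ κ₁ * (1 - s) ^ κ₂ : ℝ))
            • (rieszMean l a κ₁ (ω * s) * rieszMean μ b κ₂ (ω * (1 - s))) := by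
          simp only [hGf]
          rw [Complex.real_smul]; ring
        rw [hGfs, smul_smul]
        congr 1
        rw [Real.mul_rpow hω.le hpos.le, Real.mul_rpow hω.le (by linarith),
          Real.rpow_add hω]
        ring
    have hkey : (c : ℝ) • Cω
        = ((ω * ω ^ (κ₁ + κ₂) : ℝ)) • ∫ s in Ioc (0:ℝ) 1, Gf ω s := by
      rw [← hBint, h6, hD, smul_smul]
    -- assemble
    rw [finsum_mem_eq_finite_toFinset_sum _ hPfin]
    have hA : (∑ p ∈ hPfin.toFinset,
          ((1 - (l p.1 + μ p.2) / ω) ^ (κ₁ + κ₂ + 1) : ℝ) • (a p.1 * b p.2))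
        = ((ω ^ (κ₁ + κ₂ + 1) : ℝ)⁻¹) • Cω := by
      rw [hCωdef, Finset.smul_sum]
      apply Finset.sum_congr rfl
      intro p hp
      rw [Set.Finite.mem_toFinset] at hp
      simp only [mem_setOf_eq] at hp
      rw [smul_smul]
      congr 1
      rw [show 1 - (l p.1 + μ p.2) / ω = (ω - (l p.1 + μ p.2)) / ω by field_simp,
        Real.div_rpow (by linarith) hω.le, div_eq_mul_inv, mul_comm]
    rw [hA]
    have hCval : Cω = ((c⁻¹ * (ω * ω ^ (κ₁ + κ₂)) : ℝ))
        • ∫ s in Ioc (0:ℝ) 1, Gf ω s := by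
      have h7 := congrArg (fun z : ℂ => (c⁻¹ : ℝ) • z) hkey
      simp only [smul_smul, inv_mul_cancel₀ hc.ne', one_smul] at h7
      exact h7
    rw [hCval, smul_smul]
    congr 1
    rw [Real.rpow_add_one hω.ne' (κ₁ + κ₂)]
    have hωpow : (0:ℝ) < ω ^ (κ₁ + κ₂) := Real.rpow_pos_of_pos hω _
    field_simp
    try ring
    try exact Or.inl trivial
  -- conclusion
  have final := hL.const_smul (c⁻¹ : ℝ)
  rw [hlim] at final
  have hval : (c⁻¹ : ℝ) • ((A * B) * ((c : ℝ) : ℂ)) = A * B := by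
    rw [Complex.real_smul, Complex.ofReal_inv]
    have hne : ((c : ℝ) : ℂ) ≠ 0 := Complex.ofReal_ne_zero.2 hc.ne'
    field_simp
  rw [hval] at final
  refine Tendsto.congr' ?_ final
  filter_upwards [eventually_gt_atTop (0:ℝ)] with ω hω
  exact (hId ω hω).symm
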